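/- Let H be a bipartite graph with parts R (of size r) and S (of size at least n/2), with at least rm/n edges, and let q ≥ 2 be an integer. If (n/2)·C(rm/n², q) > (q−1)·C(r, q) (where the binomial coefficient is extended convexly), then H contains a complete bipartite subgraph K_{q,q} with one side contained in R. -/

import Mathlib

open Real

/-- Convex extension of the binomial coefficient: `x(x-1)⋯(x-q+1)/q!` for
`x ≥ q - 1`, and `0` otherwise. -/
noncomputable def cBinom (x : ℝ) (q : ℕ) : ℝ :=
  if (q : ℝ) - 1 ≤ x then (∏ i ∈ Finset.range q, (x - i)) / (Nat.factorial q) else 0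

lemma prodAux (c : ℝ) (t : Finset ℕ) (ht : ∀ i ∈ t, (i : ℝ) ≤ c) :
    ConvexOn ℝ (Set.Ici c) (fun x => ∏ i ∈ t, (x - (i:ℝ))) ∧
    MonotoneOn (fun x => ∏ i ∈ t, (x - (i:ℝ))) (Set.Ici c) ∧
    ∀ x ∈ Set.Ici c, 0 ≤ ∏ i ∈ t, (x - (i:ℝ)) := by
  induction t using Finset.cons_induction with
  | empty =>
    simp only [Finset.prod_empty]
    exact ⟨convexOn_const 1 (convex_Ici c), monotoneOn_const, fun x _ => zero_le_one⟩
  | cons j t hj ih =>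
    obtain ⟨hconv, hmono, hpos⟩ := ih (fun i hi => ht i (Finset.mem_cons.mpr (Or.inr hi)))
    have hjc : (j : ℝ) ≤ c := ht j (Finset.mem_cons_self j t)
    simp only [Finset.prod_cons]
    have hlin : ConvexOn ℝ (Set.Ici c) (fun x : ℝ => x - (j:ℝ)) := by
      refine ⟨convex_Ici c, fun x _ y _ a b ha hb hab => le_of_eq ?_⟩
      simp only [smul_eq_mul]
      linear_combination ((j:ℝ)) * hab
    have hlinmono : MonotoneOn (fun x : ℝ => x - (j:ℝ)) (Set.Ici c) :=
      fun x _ y _ hxy => by simpa using hxy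
    have hlinpos : ∀ ⦃x⦄, x ∈ Set.Ici c → 0 ≤ x - (j:ℝ) := fun x hx => by
      simp only [Set.mem_Ici] at hx; linarith
    refine ⟨hlin.mul hconv hlinpos (fun x hx => hpos x hx) (hlinmono.monovaryOn hmono), ?_, ?_⟩
    · intro x hx y hy hxy
      exact mul_le_mul (hlinmono hx hy hxy) (hmono hx hy hxy) (hpos x hx) (hlinpos hy)
    · intro x hx
      exact mul_nonneg (hlinpos hx) (hpos x hx)

lemma rangeAux (q : ℕ) : ∀ i ∈ Finset.range q, (i : ℝ) ≤ (q : ℝ) - 1 := by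
  intro i hi
  rw [Finset.mem_range] at hi
  have : (i : ℝ) + 1 ≤ (q : ℝ) := by exact_mod_cast hi
  linarith

lemma cBinom_nonneg (x : ℝ) (q : ℕ) : 0 ≤ cBinom x q := by
  unfold cBinom
  split_ifs with h
  · exact div_nonneg ((prodAux _ _ (rangeAux q)).2.2 x h) (Nat.cast_nonneg _)
  · exact le_refl _

lemma cBinom_zero_at (q : ℕ) (hq : 1 ≤ q) :
    (∏ i ∈ Finset.range q, (((q:ℝ) - 1) - i)) = 0 := by
  apply Finset.prod_eq_zero (i := q - 1) (by rw [Finset.mem_range]; omega)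
  have : ((q - 1 : ℕ) : ℝ) = (q : ℝ) - 1 := by
    push_cast [hq]; ring
  rw [this]; ring

lemma cBinom_mono (q : ℕ) (hq : 1 ≤ q) : Monotone (fun x => cBinom x q) := by
  intro x y hxy
  simp only [cBinom]
  split_ifs with h1 h2 h2
  · exact div_le_div_of_nonneg_right ((prodAux _ _ (rangeAux q)).2.1 h1 (le_trans h1 hxy) hxy)
      (Nat.cast_nonneg _)
  · exact absurd (le_trans h1 hxy) h2
  · exact div_nonneg ((prodAux _ _ (rangeAux q)).2.2 y h2) (Nat.cast_nonneg _)
  · exact le_refl 0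

lemma cBinom_convex (q : ℕ) (hq : 1 ≤ q) : ConvexOn ℝ Set.univ (fun x => cBinom x q) := by
  set c : ℝ := (q : ℝ) - 1 with hc
  set g : ℝ → ℝ := fun x => (∏ i ∈ Finset.range q, (x - (i:ℝ))) / (Nat.factorial q) with hg
  have hfact : (0:ℝ) < (Nat.factorial q : ℝ) := Nat.cast_pos.mpr (Nat.factorial_pos q)
  obtain ⟨hP, hPm, hP0⟩ := prodAux c (Finset.range q) (rangeAux q)
  have hgconv : ConvexOn ℝ (Set.Ici c) g := by
    have := hP.smul (le_of_lt (inv_pos.mpr hfact))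
    convert this using 2 with x
    case e'_12 => simp [hg, div_eq_inv_mul, smul_eq_mul]
    all_goals rfl
  have hg0 : ∀ x ∈ Set.Ici c, 0 ≤ g x := fun x hx => div_nonneg (hP0 x hx) hfact.le
  have hgc : g c = 0 := by
    simp [hg, cBinom_zero_at q hq]
    exact Or.inl (cBinom_zero_at q hq)
  have hfeq : ∀ x, c ≤ x → cBinom x q = g x := fun x hx => if_pos hx
  have hflt : ∀ x, x < c → cBinom x q = 0 := fun x hx => if_neg (not_le.mpr hx)
  have hfle : ∀ x, x ≤ c → cBinom x q = 0 := by
    intro x hx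
    rcases eq_or_lt_of_le hx with h | h
    · rw [h, hfeq c le_rfl, hgc]
    · exact hflt x h
  have key : ∀ x y a b : ℝ, x < c → c ≤ y → 0 ≤ a → 0 ≤ b → a + b = 1 →
      cBinom (a*x + b*y) q ≤ b * g y := by
    intro x y a b hx hy ha hb hab
    set z := a*x + b*y with hz
    rcases le_or_gt z c with hzc | hzc
    · rw [hfle z hzc]
      exact mul_nonneg hb (hg0 y hy)
    · have hzy : z ≤ y := by nlinarith
      have hyc : c < y := lt_of_lt_of_le hzc hzy
      set μ := (z - c) / (y - c) with hμ
      have hμ0 : 0 ≤ μ := div_nonneg (by linarith) (by linarith)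
      have hμ1 : μ ≤ 1 := (div_le_one (by linarith)).mpr (by linarith)
      have hzz : (1-μ) • c + μ • y = z := by
        simp only [smul_eq_mul]
        have hne : y - c ≠ 0 := ne_of_gt (by linarith)
        have hmc : μ * (y - c) = z - c := div_mul_cancel₀ _ hne
        linear_combination hmc
      have hj := hgconv.2 (Set.mem_Ici.mpr le_rfl) (Set.mem_Ici.mpr hy)
        (by linarith : (0:ℝ) ≤ 1 - μ) hμ0 (by ring)
      rw [hzz] at hj
      simp only [smul_eq_mul, hgc, mul_zero, zero_add] at hj
      have hμb : μ ≤ b := by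
        rw [hμ, div_le_iff₀ (by linarith)]
        nlinarith
      calc cBinom z q = g z := hfeq z hzc.le
        _ ≤ μ * g y := hj
        _ ≤ b * g y := mul_le_mul_of_nonneg_right hμb (hg0 y hy)
  refine ⟨convex_univ, fun x _ y _ a b ha hb hab => ?_⟩
  simp only [smul_eq_mul]
  rcases le_or_gt c x with hx | hx <;> rcases le_or_gt c y with hy | hy
  · have hzc : c ≤ a*x + b*y := by nlinarith
    rw [hfeq _ hzc, hfeq x hx, hfeq y hy]
    have := hgconv.2 (Set.mem_Ici.mpr hx) (Set.mem_Ici.mpr hy) ha hb hab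
    simpa using this
  · rw [hfeq x hx]
    have h1 : a*x + b*y = b*y + a*x := by ring
    rw [h1]
    calc cBinom (b*y + a*x) q ≤ a * g x := key y x b a hy hx hb ha (by linarith)
      _ ≤ a * g x + b * cBinom y q := by
          rw [hflt y hy]; simp
      _ = a * g x + b * cBinom y q := rfl
  · rw [hfeq y hy, hflt x hx]
    calc cBinom (a*x + b*y) q ≤ b * g y := key x y a b hx hy ha hb hab
      _ = a * 0 + b * g y := by ring
  · have hzc : a*x + b*y ≤ c := by nlinarith
    rw [hfle _ hzc, hflt x hx, hflt y hy]
    simp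

lemma cBinom_natCast (d q : ℕ) : cBinom (d:ℝ) q = (d.choose q : ℝ) := by
  unfold cBinom
  split_ifs with h
  · have hqd : q ≤ d + 1 := by exact_mod_cast (by linarith : (q:ℝ) ≤ (d:ℝ) + 1)
    have hprod : (∏ i ∈ Finset.range q, ((d:ℝ) - i)) = (d.descFactorial q : ℝ) := by
      rw [Nat.descFactorial_eq_prod_range, Nat.cast_prod]
      refine Finset.prod_congr rfl fun i hi => ?_
      rw [Finset.mem_range] at hi
      rw [Nat.cast_sub (by omega)]
    rw [hprod, Nat.descFactorial_eq_factorial_mul_choose, Nat.cast_mul,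
      mul_div_cancel_left₀ _ (Nat.cast_ne_zero.mpr (Nat.factorial_ne_zero q))]
  · have hdq : d < q := by
      by_contra hcon
      push_neg at hcon
      apply h
      have hqd' : (q:ℝ) ≤ (d:ℝ) := by exact_mod_cast hcon
      linarith
    rw [Nat.choose_eq_zero_of_lt hdq, Nat.cast_zero]

theorem stmt4 {α β : Type*} [Fintype α] [Fintype β] [DecidableEq α] [DecidableEq β]
    (E : α → β → Prop) [∀ a, DecidablePred (E a)]
    (R : Finset α) (S : Finset β) (n m : ℝ) (r q : ℕ)
    (hn : 0 < n) (hm : 0 < m) (hq : 2 ≤ q)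
    (hr : R.card = r)
    (hS1 : n / 2 ≤ (S.card : ℝ)) (hS2 : (S.card : ℝ) ≤ n)
    (hedges : r * m / n ≤ (((R ×ˢ S).filter (fun p => E p.1 p.2)).card : ℝ))
    (hcount : (n / 2) * cBinom (r * m / n ^ 2) q > (q - 1 : ℝ) * cBinom r q) :
    ∃ A ⊆ R, ∃ B ⊆ S, A.card = q ∧ B.card = q ∧ ∀ a ∈ A, ∀ b ∈ B, E a b := by
  classical
  have hq1 : 1 ≤ q := by omega
  set d : β → ℕ := fun b => (R.filter (fun a => E a b)).card with hd
  have hedge_sum : (((R ×ˢ S).filter (fun p => E p.1 p.2)).card) = ∑ b ∈ S, d b := by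
    rw [Finset.card_filter, Finset.sum_product, Finset.sum_comm]
    exact Finset.sum_congr rfl fun b _ => (Finset.card_filter _ _).symm
  have hNpos : (0:ℝ) < (S.card:ℝ) := by linarith
  have hesum : (r * m / n : ℝ) ≤ ∑ b ∈ S, (d b : ℝ) := by
    rw [← Nat.cast_sum, ← hedge_sum]
    exact hedges
  have hrm0 : (0:ℝ) ≤ r * m / n := by positivity
  have havg : (r * m / n ^ 2 : ℝ) ≤ (∑ b ∈ S, (d b : ℝ)) / S.card := by
    have h1 : (r * m / n) / n ≤ (r * m / n) / S.card :=
      div_le_div_of_nonneg_left hrm0 hNpos hS2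
    have h2 : (r * m / n) / (S.card : ℝ) ≤ (∑ b ∈ S, (d b : ℝ)) / S.card :=
      div_le_div_of_nonneg_right hesum (le_of_lt hNpos)
    calc (r * m / n ^ 2 : ℝ) = (r * m / n) / n := by rw [div_div, ← sq]
      _ ≤ (r * m / n) / S.card := h1
      _ ≤ _ := h2
  have hj := (cBinom_convex q hq1).map_sum_le (t := S) (w := fun _ => ((S.card:ℝ))⁻¹)
      (p := fun b => (d b : ℝ)) (fun _ _ => by positivity)
      (by rw [Finset.sum_const, nsmul_eq_mul, mul_inv_cancel₀ (ne_of_gt hNpos)])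
      (fun _ _ => Set.mem_univ _)
  simp only [smul_eq_mul] at hj
  rw [← Finset.mul_sum, ← Finset.mul_sum] at hj
  have hsum_ge : (n/2) * cBinom (r * m / n ^ 2) q ≤ ∑ b ∈ S, cBinom (d b : ℝ) q := by
    have hmono := cBinom_mono q hq1 havg
    have havg_eq : (∑ b ∈ S, (d b : ℝ)) / S.card = ((S.card:ℝ))⁻¹ * ∑ b ∈ S, (d b : ℝ) := by
      rw [inv_mul_eq_div]
    rw [havg_eq] at hmono
    have h3 : cBinom (r * m / n ^ 2) q ≤ ((S.card:ℝ))⁻¹ * ∑ b ∈ S, cBinom (d b : ℝ) q :=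
      le_trans hmono hj
    have h4 : (S.card:ℝ) * cBinom (r * m / n ^ 2) q ≤ ∑ b ∈ S, cBinom (d b : ℝ) q := by
      calc (S.card:ℝ) * cBinom (r * m / n ^ 2) q
          ≤ (S.card:ℝ) * (((S.card:ℝ))⁻¹ * ∑ b ∈ S, cBinom (d b : ℝ) q) :=
            mul_le_mul_of_nonneg_left h3 hNpos.le
        _ = ∑ b ∈ S, cBinom (d b : ℝ) q := by
            rw [← mul_assoc, mul_inv_cancel₀ (ne_of_gt hNpos), one_mul]
    calc (n/2) * cBinom (r * m / n ^ 2) q ≤ (S.card:ℝ) * cBinom (r * m / n ^ 2) q :=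
          mul_le_mul_of_nonneg_right hS1 (cBinom_nonneg _ _)
      _ ≤ _ := h4
  have hchoose : ∑ b ∈ S, cBinom (d b : ℝ) q = ((∑ b ∈ S, (d b).choose q : ℕ) : ℝ) := by
    push_cast
    exact Finset.sum_congr rfl fun b _ => cBinom_natCast (d b) q
  have hlt : ((q - 1) * r.choose q : ℕ) < ((∑ b ∈ S, (d b).choose q : ℕ)) := by
    have : ((q - 1) * r.choose q : ℕ) < (((∑ b ∈ S, (d b).choose q : ℕ)) : ℝ) := by
      rw [← hchoose]
      refine lt_of_lt_of_le ?_ hsum_ge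
      have hcast : (((q - 1) * r.choose q : ℕ) : ℝ) = (q - 1 : ℝ) * cBinom (r : ℝ) q := by
        rw [cBinom_natCast r q]
        push_cast [hq1]
        ring
      rw [hcast]
      exact hcount
    exact_mod_cast this
  have hdc : ∑ A ∈ R.powersetCard q, (S.filter (fun b => ∀ a ∈ A, E a b)).card
      = ∑ b ∈ S, (d b).choose q := by
    simp only [Finset.card_filter]
    rw [Finset.sum_comm]
    refine Finset.sum_congr rfl fun b _ => ?_
    rw [← Finset.card_filter]
    have heq : (R.powersetCard q).filter (fun A => ∀ a ∈ A, E a b)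
        = (R.filter (fun a => E a b)).powersetCard q := by
      ext A
      simp only [Finset.mem_filter, Finset.mem_powersetCard, Finset.subset_iff,
        Finset.mem_filter]
      constructor
      · rintro ⟨⟨hsub, hcard⟩, hall⟩
        exact ⟨fun a ha => ⟨hsub ha, hall a ha⟩, hcard⟩
      · rintro ⟨hsub, hcard⟩
        exact ⟨⟨fun a ha => (hsub ha).1, hcard⟩, fun a ha => (hsub ha).2⟩
    rw [heq, Finset.card_powersetCard]
  have hex : ∃ A ∈ R.powersetCard q, q ≤ (S.filter (fun b => ∀ a ∈ A, E a b)).card := by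
    by_contra hcon
    push_neg at hcon
    have hle : ∑ A ∈ R.powersetCard q, (S.filter (fun b => ∀ a ∈ A, E a b)).card
        ≤ (R.powersetCard q).card • (q - 1) :=
      Finset.sum_le_card_nsmul _ _ _ (fun A hA => by have := hcon A hA; omega)
    rw [Finset.card_powersetCard, hr, smul_eq_mul, hdc] at hle
    have := lt_of_lt_of_le hlt (le_trans hle (le_of_eq (mul_comm _ _)))
    exact lt_irrefl _ this
  obtain ⟨A, hA, hcard⟩ := hex
  rw [Finset.mem_powersetCard] at hA
  obtain ⟨B, hBsub, hBcard⟩ := Finset.exists_subset_card_eq hcard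
  exact ⟨A, hA.1, B, hBsub.trans (Finset.filter_subset _ _), hA.2, hBcard,
    fun a ha b hb => (Finset.mem_filter.mp (hBsub hb)).2 a ha⟩
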